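/- Consider the map on triples of bi-infinite sequences defined (in the coordinates x_i, y_i, z_i) by T*(x_i) = x_{i+1}(1 + y_{i−1} + z_{i+2} + y_{i−1}z_{i+2} − y_{i+1}z_i)/(1 + y_{i−1} + z_i), T*(y_i) = (x_{i−1}y_{i−1}z_i)/(x_i z_{i−1}) · (1+y_{i+1}+z_{i+2})(1+y_{i−2}+z_{i−1}) / ((1+y_i+z_{i+1})(1+y_{i−1}+z_{i+2}+y_{i−1}z_{i+2}−y_{i+1}z_i)), T*(z_i) = (x_{i+1}z_i)/x_i · (1+y_{i+1}+z_{i+2})(1+y_{i−2}+z_{i−1}) / ((1+y_{i−1}+z_i)(1+y_{i−2}+z_{i+1}−y_iz_{i−1}+y_{i−2}z_{i+1})). Then the product I₀⁻⁴ := ∏_{i=0}^{n−1} x_i² y_i z_i over one period of n-periodic sequences is invariant under this map: ∏ T*(x_i)² T*(y_i) T*(z_i) = ∏ x_i² y_i z_i. -/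

import Mathlib

open scoped BigOperators

def Afun (y z : ℤ → ℝ) (i : ℤ) : ℝ := 1 + y (i - 1) + z i
def Cfun (y z : ℤ → ℝ) (i : ℤ) : ℝ :=
  1 + y (i - 1) + z (i + 2) + y (i - 1) * z (i + 2) - y (i + 1) * z i

lemma prod_shift_one (f : ℤ → ℝ) (n : ℕ) (hf : ∀ i, f (i + n) = f i) :
    ∏ i ∈ Finset.range n, f ((i : ℤ) + 1) = ∏ i ∈ Finset.range n, f (i : ℤ) := by
  cases n with
  | zero => simp
  | succ m =>
    rw [Finset.prod_range_succ, Finset.prod_range_succ']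
    have h0 : f ((m : ℤ) + 1) = f 0 := by
      have := hf 0
      rw [zero_add] at this
      rw [← this]
      norm_num
    rw [h0]
    congr 1

lemma prod_shift (f : ℤ → ℝ) (n : ℕ) (hf : ∀ i, f (i + n) = f i) (k : ℤ) :
    ∏ i ∈ Finset.range n, f ((i : ℤ) + k) = ∏ i ∈ Finset.range n, f (i : ℤ) := by
  induction k using Int.induction_on with
  | zero => simp
  | succ k ih =>
    have h1 := prod_shift_one (fun j => f (j + k)) n (fun i => by
      rw [show i + (n : ℤ) + k = (i + k) + n by ring, hf])
    simp only [show ∀ a : ℤ, a + ((k : ℤ) + 1) = a + 1 + k from fun a => by ring]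
    rw [h1, ih]
  | pred k ih =>
    have h1 := prod_shift_one (fun j => f (j + (-(k : ℤ) - 1))) n (fun i => by
      rw [show i + (n : ℤ) + (-(k:ℤ) - 1) = (i + (-(k:ℤ) - 1)) + n by ring, hf])
    have e : ∀ i : ℕ, ((i : ℤ) + 1) + (-(k : ℤ) - 1) = (i : ℤ) + (-(k:ℤ)) := fun i => by ring
    simp only [e] at h1
    rw [← h1, ih]


open scoped BigOperators

/-- **Invariance of `I₀⁻⁴ = ∏ x_i² y_i z_i` under the 3D pentagram map.**
Consider the 3D pentagram map written in the coordinates `(x_i, y_i, z_i)` of `n`-periodic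
sequences of scalars (with all appearing denominators nonzero):
`T*(x_i) = x_{i+1}(1 + y_{i−1} + z_{i+2} + y_{i−1}z_{i+2} − y_{i+1}z_i)/(1 + y_{i−1} + z_i)`,
`T*(y_i), T*(z_i)` as in the theorem of explicit formulas. Then the product
`∏_{i=0}^{n−1} x_i² y_i z_i` over one period is invariant:
`∏ T*(x_i)² T*(y_i) T*(z_i) = ∏ x_i² y_i z_i`. -/
theorem pentagram3D_product_invariant (n : ℕ) (hn : 0 < n) (x y z x' y' z' : ℤ → ℝ)
    (hxper : ∀ i, x (i + n) = x i) (hyper : ∀ i, y (i + n) = y i)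
    (hzper : ∀ i, z (i + n) = z i)
    (hx'per : ∀ i, x' (i + n) = x' i) (hy'per : ∀ i, y' (i + n) = y' i)
    (hz'per : ∀ i, z' (i + n) = z' i)
    (hx0 : ∀ i, x i ≠ 0) (hz0 : ∀ i, z i ≠ 0)
    (hA : ∀ i, 1 + y (i - 1) + z i ≠ 0)
    (hB : ∀ i, 1 + y i + z (i + 1) ≠ 0)
    (hC : ∀ i, 1 + y (i - 1) + z (i + 2) + y (i - 1) * z (i + 2) - y (i + 1) * z i ≠ 0)
    (hD : ∀ i, 1 + y (i - 2) + z (i + 1) - y i * z (i - 1) + y (i - 2) * z (i + 1) ≠ 0)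
    (hx' : ∀ i, x' i = x (i + 1) *
      (1 + y (i - 1) + z (i + 2) + y (i - 1) * z (i + 2) - y (i + 1) * z i) /
        (1 + y (i - 1) + z i))
    (hy' : ∀ i, y' i = (x (i - 1) * y (i - 1) * z i) / (x i * z (i - 1)) *
      ((1 + y (i + 1) + z (i + 2)) * (1 + y (i - 2) + z (i - 1))) /
        ((1 + y i + z (i + 1)) *
          (1 + y (i - 1) + z (i + 2) + y (i - 1) * z (i + 2) - y (i + 1) * z i)))
    (hz' : ∀ i, z' i = (x (i + 1) * z i) / x i *
      ((1 + y (i + 1) + z (i + 2)) * (1 + y (i - 2) + z (i - 1))) /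
        ((1 + y (i - 1) + z i) *
          (1 + y (i - 2) + z (i + 1) - y i * z (i - 1) + y (i - 2) * z (i + 1)))) :
    ∏ i ∈ Finset.range n, x' (i : ℤ) ^ 2 * y' (i : ℤ) * z' (i : ℤ) =
      ∏ i ∈ Finset.range n, x (i : ℤ) ^ 2 * y (i : ℤ) * z (i : ℤ) := by
  -- Folded nonvanishing facts
  have hA' : ∀ i, Afun y z i ≠ 0 := fun i => hA i
  have hC' : ∀ i, Cfun y z i ≠ 0 := fun i => hC i
  have hCm : ∀ i, Cfun y z (i - 1) ≠ 0 := by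
    intro i
    have e : Cfun y z (i - 1) =
        1 + y (i - 2) + z (i + 1) - y i * z (i - 1) + y (i - 2) * z (i + 1) := by
      simp only [Cfun]
      rw [show i - 1 - 1 = i - 2 by ring, show i - 1 + 2 = i + 1 by ring,
        show i - 1 + 1 = i by ring]
      ring
    rw [e]; exact hD i
  -- Folded formulas for the map
  have hx'' : ∀ i, x' i = x (i + 1) * Cfun y z i / Afun y z i := fun i => hx' i
  have hy'' : ∀ i, y' i = (x (i - 1) * y (i - 1) * z i) / (x i * z (i - 1)) *
      (Afun y z (i + 2) * Afun y z (i - 1)) / (Afun y z (i + 1) * Cfun y z i) := by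
    intro i
    rw [hy' i]
    simp only [Afun, Cfun]
    rw [show i + 2 - 1 = i + 1 by ring, show i - 1 - 1 = i - 2 by ring,
      show i + 1 - 1 = i by ring]
  have hz'' : ∀ i, z' i = (x (i + 1) * z i) / x i *
      (Afun y z (i + 2) * Afun y z (i - 1)) / (Afun y z i * Cfun y z (i - 1)) := by
    intro i
    rw [hz' i]
    simp only [Afun, Cfun]
    rw [show i + 2 - 1 = i + 1 by ring, show i - 1 - 1 = i - 2 by ring,
      show i - 1 + 2 = i + 1 by ring, show i - 1 + 1 = i by ring]
    ring
  -- Per-term identity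
  have key : ∀ i : ℤ, x' i ^ 2 * y' i * z' i =
      (x (i + 1) ^ 3 * x (i - 1) * y (i - 1) * z i ^ 2 * Cfun y z i
        * Afun y z (i + 2) ^ 2 * Afun y z (i - 1) ^ 2) /
      (x i ^ 2 * z (i - 1) * Cfun y z (i - 1) * Afun y z i ^ 3 * Afun y z (i + 1)) := by
    intro i
    have h1 := hA' i
    have h2 := hA' (i + 1)
    have h3 := hC' i
    have h4 := hCm i
    have h5 := hx0 i
    have h6 := hz0 (i - 1)
    rw [hx'' i, hy'' i, hz'' i]
    field_simp
  have hAper : ∀ i, Afun y z (i + n) = Afun y z i := by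
    intro i
    simp only [Afun]
    rw [show i + (n:ℤ) - 1 = (i - 1) + n by ring, hyper, hzper]
  have hCper : ∀ i, Cfun y z (i + n) = Cfun y z i := by
    intro i
    simp only [Cfun]
    rw [show i + (n:ℤ) - 1 = (i - 1) + n by ring, show i + (n:ℤ) + 2 = (i + 2) + n by ring,
      show i + (n:ℤ) + 1 = (i + 1) + n by ring, hyper, hzper, hyper, hzper]
  have hPx : ∏ i ∈ Finset.range n, x (i : ℤ) ≠ 0 :=
    Finset.prod_ne_zero_iff.mpr fun i _ => hx0 i
  have hPz : ∏ i ∈ Finset.range n, z (i : ℤ) ≠ 0 :=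
    Finset.prod_ne_zero_iff.mpr fun i _ => hz0 i
  have hPA : ∏ i ∈ Finset.range n, Afun y z (i : ℤ) ≠ 0 :=
    Finset.prod_ne_zero_iff.mpr fun i _ => hA' i
  have hPC : ∏ i ∈ Finset.range n, Cfun y z (i : ℤ) ≠ 0 :=
    Finset.prod_ne_zero_iff.mpr fun i _ => hC' i
  calc ∏ i ∈ Finset.range n, x' (i : ℤ) ^ 2 * y' (i : ℤ) * z' (i : ℤ)
      = ∏ i ∈ Finset.range n,
        (x ((i : ℤ) + 1) ^ 3 * x ((i : ℤ) - 1) * y ((i : ℤ) - 1) * z (i : ℤ) ^ 2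
          * Cfun y z (i : ℤ) * Afun y z ((i : ℤ) + 2) ^ 2 * Afun y z ((i : ℤ) - 1) ^ 2) /
        (x (i : ℤ) ^ 2 * z ((i : ℤ) - 1) * Cfun y z ((i : ℤ) - 1) * Afun y z (i : ℤ) ^ 3
          * Afun y z ((i : ℤ) + 1)) :=
        Finset.prod_congr rfl fun i _ => key (i : ℤ)
    _ = ∏ i ∈ Finset.range n, x (i : ℤ) ^ 2 * y (i : ℤ) * z (i : ℤ) := by
        simp only [Finset.prod_div_distrib, Finset.prod_mul_distrib, Finset.prod_pow,
          sub_eq_add_neg]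
        rw [prod_shift x n hxper 1, prod_shift x n hxper (-1),
          prod_shift y n hyper (-1), prod_shift z n hzper (-1),
          prod_shift (Afun y z) n hAper 2, prod_shift (Afun y z) n hAper (-1),
          prod_shift (Afun y z) n hAper 1, prod_shift (Cfun y z) n hCper (-1)]
        field_simp
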